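/- Let μ be a Borel measure on ℝⁿ, let F : (0, μ(ℝⁿ)) → ℝ be a continuous strictly monotone function, and suppose μ is F-concave on a class 𝒞 of compact sets: μ((1−λ)K + λL) ≥ F^{−1}((1−λ)F(μ(K)) + λF(μ(L))) for all K, L ∈ 𝒞 and λ ∈ [0,1]. Assume F is differentiable at μ(K) with F′(μ(K)) ≠ 0. Then the mixed measures satisfy Minkowski's first inequality: μ(K;L) − μ(K;K) ≥ (F(μ(L)) − F(μ(K)))/F′(μ(K)), where μ(K;M) := liminf_{ε→0⁺} (μ(K + εM) − μ(K))/ε and we assume the one-sided derivative d/dλ μ((1−λ)K + λL)|_{λ=0⁺} exists and equals μ(K;L) − μ(K;K). -/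

import Mathlib

open Pointwise MeasureTheory Filter Set

/-- The mixed measure `μ(K;M) = liminf_{ε→0⁺} (μ(K+εM)-μ(K))/ε`. -/
noncomputable def mixm {n : ℕ} (μ : Measure (EuclideanSpace ℝ (Fin n)))
    (K M : Set (EuclideanSpace ℝ (Fin n))) : ℝ :=
  liminf (fun ε : ℝ => ((μ (K + ε • M)).toReal - (μ K).toReal) / ε)
    (nhdsWithin 0 (Set.Ioi 0))

theorem stmt14 {n : ℕ} (μ : Measure (EuclideanSpace ℝ (Fin n)))
    (C : Set (Set (EuclideanSpace ℝ (Fin n)))) (hCcpt : ∀ A ∈ C, IsCompact A)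
    (F : ℝ → ℝ) (hFcont : Continuous F)
    (hconc :
      (StrictMono F ∧ ∀ K ∈ C, ∀ L ∈ C, ∀ l ∈ Set.Icc (0:ℝ) 1,
        (1-l) * F (μ K).toReal + l * F (μ L).toReal ≤
          F (μ ((1-l) • K + l • L)).toReal) ∨
      (StrictAnti F ∧ ∀ K ∈ C, ∀ L ∈ C, ∀ l ∈ Set.Icc (0:ℝ) 1,
        F (μ ((1-l) • K + l • L)).toReal ≤
          (1-l) * F (μ K).toReal + l * F (μ L).toReal))
    (K L : Set (EuclideanSpace ℝ (Fin n))) (hK : K ∈ C) (hL : L ∈ C)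
    (F' : ℝ) (hF' : HasDerivAt F F' (μ K).toReal) (hF'ne : F' ≠ 0)
    (hderiv : HasDerivWithinAt (fun l : ℝ => (μ ((1-l) • K + l • L)).toReal)
      (mixm μ K L - mixm μ K K) (Set.Ici 0) 0) :
    (F (μ L).toReal - F (μ K).toReal) / F' ≤ mixm μ K L - mixm μ K K := by
  set D : ℝ := mixm μ K L - mixm μ K K with hD
  rcases L.eq_empty_or_nonempty with hLe | hLne
  · -- L is empty : the function is identically 0 on Ici 0, so D = 0, and F (μ L) = F (μ K).
    subst hLe
    have hfun : ∀ l : ℝ, (μ ((1-l) • K + l • (∅ : Set (EuclideanSpace ℝ (Fin n))))).toReal = 0 := by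
      intro l
      simp [smul_set_empty]
    have hD0 : D = 0 := by
      have h0 : HasDerivWithinAt (fun l : ℝ => (μ ((1-l) • K + l • (∅ : Set (EuclideanSpace ℝ (Fin n))))).toReal)
          0 (Set.Ici 0) 0 := by
        have := hasDerivWithinAt_const (0:ℝ) (Set.Ici (0:ℝ)) (0:ℝ)
        exact this.congr (fun x _ => hfun x) (hfun 0)
      have h1 := (uniqueDiffOn_Ici (0:ℝ) 0 Set.self_mem_Ici).eq_deriv _ hderiv h0
      simpa using h1
    have hKE : F (μ (∅ : Set (EuclideanSpace ℝ (Fin n)))).toReal = F (μ K).toReal := by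
      have hhalf : ((1:ℝ)/2) ∈ Set.Icc (0:ℝ) 1 := by norm_num
      have hset : (1 - (1:ℝ)/2) • K + ((1:ℝ)/2) • (∅ : Set (EuclideanSpace ℝ (Fin n))) = ∅ := by
        simp [smul_set_empty]
      have h0K : (0:ℝ) ≤ (μ K).toReal := ENNReal.toReal_nonneg
      have hE0 : (μ (∅ : Set (EuclideanSpace ℝ (Fin n)))).toReal = 0 := by simp
      rcases hconc with ⟨hmono, hc⟩ | ⟨hanti, hc⟩
      · have := hc K hK ∅ hL (1/2) hhalf
        rw [hset] at this
        have h1 : F (μ K).toReal ≤ F (μ (∅ : Set (EuclideanSpace ℝ (Fin n)))).toReal := by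
          nlinarith
        have h2 : F (μ (∅ : Set (EuclideanSpace ℝ (Fin n)))).toReal ≤ F (μ K).toReal := by
          rw [hE0]; exact hmono.monotone h0K
        linarith
      · have := hc K hK ∅ hL (1/2) hhalf
        rw [hset] at this
        have h1 : F (μ (∅ : Set (EuclideanSpace ℝ (Fin n)))).toReal ≤ F (μ K).toReal := by
          nlinarith
        have h2 : F (μ K).toReal ≤ F (μ (∅ : Set (EuclideanSpace ℝ (Fin n)))).toReal := by
          rw [hE0]; exact hanti.antitone h0K
        linarith
    rw [hD0, hKE]
    simp
  · -- L nonempty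
    have g0 : (μ ((1-(0:ℝ)) • K + (0:ℝ) • L)).toReal = (μ K).toReal := by
      rw [sub_zero, one_smul, zero_smul_set hLne]
      norm_num
    have hcomp : HasDerivWithinAt (fun l : ℝ => F ((μ ((1-l) • K + l • L)).toReal))
        (F' * D) (Set.Ici 0) 0 := by
      have := (g0 ▸ hF').comp_hasDerivWithinAt (0:ℝ) hderiv
      exact this
    set g : ℝ → ℝ := fun l => F ((μ ((1-l) • K + l • L)).toReal) with hg
    have hg0 : g 0 = F (μ K).toReal := congrArg F g0
    have hslope := hasDerivWithinAt_iff_tendsto_slope.1 hcomp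
    have hIci : Set.Ici (0:ℝ) \ {0} = Set.Ioi (0:ℝ) := by
      ext x; simp [lt_iff_le_and_ne, eq_comm, and_comm]
    rw [hIci] at hslope
    have hev : ∀ᶠ l in nhdsWithin (0:ℝ) (Set.Ioi 0), l ∈ Set.Ioc (0:ℝ) 1 := by
      filter_upwards [Ioo_mem_nhdsGT_of_mem (by norm_num : (0:ℝ) ∈ Set.Ico 0 1)] with l hl
      exact ⟨hl.1, hl.2.le⟩
    rcases hconc with ⟨hmono, hc⟩ | ⟨hanti, hc⟩
    · -- F increasing: F' > 0 and b ≤ F' * D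
      have hF'nonneg : 0 ≤ F' := by
        have hs := hasDerivAt_iff_tendsto_slope.1 hF'
        refine ge_of_tendsto hs ?_
        filter_upwards [self_mem_nhdsWithin] with y hy
        rcases lt_or_gt_of_ne (hy : y ≠ (μ K).toReal) with h | h
        · have : F y < F (μ K).toReal := hmono h
          rw [slope_def_field]
          exact le_of_lt (div_pos_of_neg_of_neg (by linarith) (by linarith))
        · have : F (μ K).toReal < F y := hmono h
          rw [slope_def_field]
          exact le_of_lt (div_pos (by linarith) (by linarith))
      have hF'pos : 0 < F' := lt_of_le_of_ne hF'nonneg (Ne.symm hF'ne)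
      have hkey : F (μ L).toReal - F (μ K).toReal ≤ F' * D := by
        refine ge_of_tendsto hslope ?_
        filter_upwards [hev] with l hl
        have hcl := hc K hK L hL l ⟨hl.1.le, hl.2⟩
        have hgl : F (μ K).toReal + l * (F (μ L).toReal - F (μ K).toReal) ≤ g l := by
          rw [hg]; dsimp only
          have : F (μ K).toReal + l * (F (μ L).toReal - F (μ K).toReal)
              = (1-l) * F (μ K).toReal + l * F (μ L).toReal := by ring
          linarith
        rw [slope_def_field, hg0, sub_zero, le_div_iff₀ hl.1]
        nlinarith
      rw [div_le_iff₀ hF'pos]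
      linarith
    · -- F decreasing: F' < 0 and F' * D ≤ b
      have hF'nonpos : F' ≤ 0 := by
        have hs := hasDerivAt_iff_tendsto_slope.1 hF'
        refine le_of_tendsto hs ?_
        filter_upwards [self_mem_nhdsWithin] with y hy
        rcases lt_or_gt_of_ne (hy : y ≠ (μ K).toReal) with h | h
        · have : F (μ K).toReal < F y := hanti h
          rw [slope_def_field]
          exact le_of_lt (div_neg_of_pos_of_neg (by linarith) (by linarith))
        · have : F y < F (μ K).toReal := hanti h
          rw [slope_def_field]
          exact le_of_lt (div_neg_of_neg_of_pos (by linarith) (by linarith))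
      have hF'neg : F' < 0 := lt_of_le_of_ne hF'nonpos hF'ne
      have hkey : F' * D ≤ F (μ L).toReal - F (μ K).toReal := by
        refine le_of_tendsto hslope ?_
        filter_upwards [hev] with l hl
        have hcl := hc K hK L hL l ⟨hl.1.le, hl.2⟩
        have hgl : g l ≤ F (μ K).toReal + l * (F (μ L).toReal - F (μ K).toReal) := by
          rw [hg]; dsimp only
          have : F (μ K).toReal + l * (F (μ L).toReal - F (μ K).toReal)
              = (1-l) * F (μ K).toReal + l * F (μ L).toReal := by ring
          linarith
        rw [slope_def_field, hg0, sub_zero, div_le_iff₀ hl.1]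
        nlinarith
      rw [div_le_iff_of_neg hF'neg]
      linarith
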